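/- Let p, s′ be positive integers, L ≥ 0, c > 0, and let S⁰ and S be p×p real matrices such that νᵀS⁰ν ≥ c‖ν‖₂² for all ν ∈ ℝ^p and ‖S − S⁰‖_∞ ≤ c/(2(L+1)² s′). Then for every subset S′ ⊆ {1,…,p} with |S′| = s′ and every ν ∈ ℝ^p satisfying the cone condition ‖ν_{(S′)^c}‖₁ ≤ L‖ν_{S′}‖₁, one has νᵀSν ≥ (c/2)‖ν‖₂², and consequently s′ · νᵀSν ≥ (c/2)‖ν_{S′}‖₁². -/

import Mathlib

open BigOperators Matrix

/-- If `S⁰` satisfies `νᵀS⁰ν ≥ c‖ν‖₂²` for all `ν` and `S` is entrywise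
close to `S⁰` (`‖S − S⁰‖_∞ ≤ c/(2(L+1)²s′)`), then for every set `S′` of cardinality `s′`
and every `ν` in the cone `‖ν_{(S′)ᶜ}‖₁ ≤ L‖ν_{S′}‖₁` one has `νᵀSν ≥ (c/2)‖ν‖₂²`, and
consequently `s′·νᵀSν ≥ (c/2)‖ν_{S′}‖₁²` (the compatibility condition). -/
theorem compatibility_of_perturbed_matrix
    (p s' : ℕ) (hp : 0 < p) (hs' : 0 < s')
    (L c : ℝ) (hL : 0 ≤ L) (hc : 0 < c)
    (S0 S : Matrix (Fin p) (Fin p) ℝ)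
    (hS0 : ∀ ν : Fin p → ℝ, c * ∑ j, (ν j) ^ 2 ≤ ν ⬝ᵥ S0.mulVec ν)
    (hclose : ∀ j k, |S j k - S0 j k| ≤ c / (2 * (L + 1) ^ 2 * s')) :
    ∀ S' : Finset (Fin p), S'.card = s' →
      ∀ ν : Fin p → ℝ, (∑ j ∈ S'ᶜ, |ν j|) ≤ L * ∑ j ∈ S', |ν j| →
        (c / 2) * ∑ j, (ν j) ^ 2 ≤ ν ⬝ᵥ S.mulVec ν ∧
        (c / 2) * (∑ j ∈ S', |ν j|) ^ 2 ≤ (s' : ℝ) * (ν ⬝ᵥ S.mulVec ν) := by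
  intro S' hcard ν hcone
  set ε : ℝ := c / (2 * (L + 1) ^ 2 * s') with hε
  have hL1 : (0:ℝ) < L + 1 := by linarith
  have hs'R : (0:ℝ) < (s' : ℝ) := by exact_mod_cast hs'
  have hεpos : 0 < ε := by
    apply div_pos hc
    positivity
  set A : ℝ := ∑ j ∈ S', |ν j| with hA
  set Q : ℝ := ∑ j, (ν j) ^ 2 with hQ
  have hAnn : 0 ≤ A := Finset.sum_nonneg fun j _ => abs_nonneg _
  -- Cauchy–Schwarz on S'
  have hCS : A ^ 2 ≤ (s' : ℝ) * ∑ j ∈ S', (ν j) ^ 2 := by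
    have := sq_sum_le_card_mul_sum_sq (s := S') (f := fun j => |ν j|)
    simpa [hcard, sq_abs] using this
  have hsubQ : ∑ j ∈ S', (ν j) ^ 2 ≤ Q :=
    Finset.sum_le_sum_of_subset_of_nonneg (Finset.subset_univ S')
      (fun j _ _ => sq_nonneg _)
  -- total ℓ¹ norm
  have hT : (∑ j, |ν j|) = A + ∑ j ∈ S'ᶜ, |ν j| := by
    rw [hA, ← Finset.sum_add_sum_compl S' (fun j => |ν j|)]
  have hTle : (∑ j, |ν j|) ≤ (L + 1) * A := by
    rw [hT]; nlinarith [hcone]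
  have hTnn : 0 ≤ ∑ j, |ν j| := Finset.sum_nonneg fun j _ => abs_nonneg _
  -- perturbation bound
  have hdiff : ν ⬝ᵥ S.mulVec ν - ν ⬝ᵥ S0.mulVec ν
      = ∑ i, ∑ j, ν i * ((S i j - S0 i j) * ν j) := by
    simp only [dotProduct, mulVec]
    rw [← Finset.sum_sub_distrib]
    refine Finset.sum_congr rfl fun i _ => ?_
    rw [← mul_sub, ← Finset.sum_sub_distrib, Finset.mul_sum]
    congr 1; funext j; ring
  have hpert : |ν ⬝ᵥ S.mulVec ν - ν ⬝ᵥ S0.mulVec ν| ≤ ε * (∑ j, |ν j|) ^ 2 := by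
    rw [hdiff]
    calc |∑ i, ∑ j, ν i * ((S i j - S0 i j) * ν j)|
        ≤ ∑ i, ∑ j, |ν i * ((S i j - S0 i j) * ν j)| := by
          refine (Finset.abs_sum_le_sum_abs _ _).trans ?_
          exact Finset.sum_le_sum fun i _ => Finset.abs_sum_le_sum_abs _ _
      _ ≤ ∑ i, ∑ j, |ν i| * (ε * |ν j|) := by
          refine Finset.sum_le_sum fun i _ => Finset.sum_le_sum fun j _ => ?_
          rw [abs_mul, abs_mul]
          exact mul_le_mul_of_nonneg_left
            (mul_le_mul_of_nonneg_right (hclose i j) (abs_nonneg _)) (abs_nonneg _)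
      _ = ε * (∑ j, |ν j|) ^ 2 := by
          rw [sq, Finset.sum_mul_sum, Finset.mul_sum]
          refine Finset.sum_congr rfl fun i _ => ?_
          rw [Finset.mul_sum]
          exact Finset.sum_congr rfl fun j _ => by ring
  have hεT : ε * (∑ j, |ν j|) ^ 2 ≤ (c / 2) * Q := by
    have h1 : (∑ j, |ν j|) ^ 2 ≤ (L + 1) ^ 2 * A ^ 2 := by
      rw [← mul_pow]
      exact pow_le_pow_left₀ hTnn hTle 2
    have h2 : ε * (∑ j, |ν j|) ^ 2 ≤ ε * ((L + 1) ^ 2 * A ^ 2) :=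
      mul_le_mul_of_nonneg_left h1 hεpos.le
    have h3 : ε * ((L + 1) ^ 2 * A ^ 2) = c / (2 * s') * A ^ 2 := by
      rw [hε]; field_simp
    have h4 : c / (2 * s') * A ^ 2 ≤ c / (2 * s') * ((s' : ℝ) * Q) := by
      refine mul_le_mul_of_nonneg_left ?_ (by positivity)
      exact hCS.trans (mul_le_mul_of_nonneg_left hsubQ hs'R.le)
    have h5 : c / (2 * s') * ((s' : ℝ) * Q) = (c / 2) * Q := by
      field_simp
    linarith
  have hmain : (c / 2) * Q ≤ ν ⬝ᵥ S.mulVec ν := by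
    have := hS0 ν
    have habs := (abs_le.mp hpert).1
    rw [← hQ] at this
    linarith
  refine ⟨hmain, ?_⟩
  have : (c / 2) * A ^ 2 ≤ (c / 2) * ((s' : ℝ) * Q) := by
    refine mul_le_mul_of_nonneg_left ?_ (by positivity)
    exact hCS.trans (mul_le_mul_of_nonneg_left hsubQ hs'R.le)
  calc (c / 2) * A ^ 2 ≤ (c / 2) * ((s' : ℝ) * Q) := this
    _ = (s' : ℝ) * ((c / 2) * Q) := by ring
    _ ≤ (s' : ℝ) * (ν ⬝ᵥ S.mulVec ν) := mul_le_mul_of_nonneg_left hmain hs'R.le
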